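/- For languages a, b, s over α, the language a∗·s·b∗ satisfies the bilateral-linear equation r = a·r + r·b + s, i.e., a∗·s·b∗ = a·(a∗·s·b∗) + (a∗·s·b∗)·b + s. -/

import Mathlib

open Computability

theorem stmt_5 {α : Type*} (a b s : Language α) :
    a∗ * s * b∗ = a * (a∗ * s * b∗) + (a∗ * s * b∗) * b + s := by
  have hs : s * b∗ ≤ a∗ * s * b∗ := by
    calc s * b∗ = 1 * (s * b∗) := (one_mul _).symm
      _ ≤ a∗ * (s * b∗) := mul_le_mul_left one_le_kstar _
      _ = a∗ * s * b∗ := (mul_assoc _ _ _).symm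
  apply le_antisymm
  · calc a∗ * s * b∗ = (1 + a * a∗) * s * b∗ := by
          rw [Language.one_add_self_mul_kstar_eq_kstar]
      _ = s * b∗ + a * (a∗ * s * b∗) := by
          rw [add_mul, add_mul, one_mul]; simp [mul_assoc]
      _ = s * (1 + b∗ * b) + a * (a∗ * s * b∗) := by
          rw [Language.one_add_kstar_mul_self_eq_kstar]
      _ = s + s * b∗ * b + a * (a∗ * s * b∗) := by
          rw [mul_add, mul_one]; simp [mul_assoc]
      _ ≤ s + (a∗ * s * b∗) * b + a * (a∗ * s * b∗) := by
          exact add_le_add_left (add_le_add_right (mul_le_mul_left hs b) s) _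
      _ = a * (a∗ * s * b∗) + (a∗ * s * b∗) * b + s := by
          abel
  · refine add_le (add_le ?_ ?_) ?_
    · rw [← mul_assoc, ← mul_assoc]
      exact mul_le_mul_left (mul_le_mul_left mul_kstar_le_kstar s) _
    · rw [mul_assoc]
      exact mul_le_mul_right kstar_mul_le_kstar _
    · calc s = 1 * s * 1 := by rw [one_mul, mul_one]
        _ ≤ a∗ * s * b∗ :=
          mul_le_mul' (mul_le_mul_left one_le_kstar s) one_le_kstar
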